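/- arXiv:1611.10349 — 2 statements merged into one kernel-verified Lean document; each statement's English description precedes it below -/
import Mathlib

section
/- For a matrix M ∈ R^{d₁×d₂} and r ≤ min(d₁,d₂), let P_r(M) denote a best rank-r approximation of M in Frobenius norm (given by truncating the SVD to the top r singular values). Then for any r₁ < r₂ < r₀, any matrix Z of rank at most r₀, and any matrix Y of rank at most r₁: ‖P_{r₂}(Z) − Z‖_F ≤ sqrt((r₀−r₂)/(r₀−r₁)) · ‖Y − Z‖_F. -/
/-- Frobenius norm of a real matrix. -/
noncomputable def frob {m n : Type*} [Fintype m] [Fintype n] (M : Matrix m n ℝ) : ℝ :=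
  Real.sqrt (∑ i, ∑ j, (M i j) ^ 2)

open Matrix Finset

noncomputable def frobSq {m n : Type*} [Fintype m] [Fintype n] (M : Matrix m n ℝ) : ℝ :=
  ∑ i, ∑ j, (M i j) ^ 2

lemma frobSq_nonneg {m n : Type*} [Fintype m] [Fintype n] (M : Matrix m n ℝ) : 0 ≤ frobSq M := by
  apply Finset.sum_nonneg; intro i _; apply Finset.sum_nonneg; intro j _; positivity

lemma frob_eq {m n : Type*} [Fintype m] [Fintype n] (M : Matrix m n ℝ) :
    frob M = Real.sqrt (frobSq M) := rfl

lemma frobSq_eq_trace {m n : Type*} [Fintype m] [Fintype n] (M : Matrix m n ℝ) :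
    frobSq M = (Mᵀ * M).trace := by
  rw [frobSq, Matrix.trace, Finset.sum_comm]
  congr 1; ext j
  simp [Matrix.diag, Matrix.mul_apply, sq]

lemma frobSq_neg_sub {m n : Type*} [Fintype m] [Fintype n] (A B : Matrix m n ℝ) :
    frobSq (A - B) = frobSq (B - A) := by
  unfold frobSq
  congr 1; ext i; congr 1; ext j
  have : (A - B) i j = -((B - A) i j) := by simp [Matrix.sub_apply]
  rw [this]; ring

-- frobSq (M * Q) = trace (Mᵀ M Q) for symmetric idempotent Q
lemma frobSq_mul_proj {m n : Type*} [Fintype m] [Fintype n] [DecidableEq n]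
    (M : Matrix m n ℝ) (Q : Matrix n n ℝ) (hsym : Qᵀ = Q) (hidem : Q * Q = Q) :
    frobSq (M * Q) = (Mᵀ * M * Q).trace := by
  rw [frobSq_eq_trace, Matrix.transpose_mul, hsym]
  calc (Q * Mᵀ * (M * Q)).trace = (Q * (Mᵀ * (M * Q))).trace := by rw [Matrix.mul_assoc]
    _ = ((Mᵀ * (M * Q)) * Q).trace := by rw [Matrix.trace_mul_comm]
    _ = (Mᵀ * M * Q).trace := by rw [Matrix.mul_assoc, Matrix.mul_assoc, Matrix.mul_assoc, hidem]

lemma frobSq_mul_proj_le {m n : Type*} [Fintype m] [Fintype n] [DecidableEq n]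
    (M : Matrix m n ℝ) (Q : Matrix n n ℝ) (hsym : Qᵀ = Q) (hidem : Q * Q = Q) :
    frobSq (M * Q) ≤ frobSq M := by
  have h1 : (1 - Q : Matrix n n ℝ)ᵀ = 1 - Q := by
    rw [Matrix.transpose_sub, Matrix.transpose_one, hsym]
  have h2 : (1 - Q) * (1 - Q) = 1 - Q := by
    simp [Matrix.sub_mul, Matrix.mul_sub, hidem]
  have e1 := frobSq_mul_proj M Q hsym hidem
  have e2 := frobSq_mul_proj M (1 - Q) h1 h2
  have e3 : Mᵀ * M * (1 - Q) = Mᵀ * M - Mᵀ * M * Q := by rw [Matrix.mul_sub, Matrix.mul_one]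
  have e4 : frobSq (M * (1 - Q)) = frobSq M - frobSq (M * Q) := by
    rw [e1, e2, e3, Matrix.trace_sub, frobSq_eq_trace M]
  have := frobSq_nonneg (M * (1 - Q))
  linarith


lemma proj_of_family {d₁ d₂ m : ℕ} (W : Matrix (Fin d₁) (Fin d₂) ℝ)
    (v : Fin m → (Fin d₂ → ℝ))
    (horth : ∀ j j', (∑ c, v j c * v j' c) = if j = j' then 1 else 0)
    (hker : ∀ j, W.mulVec (v j) = 0) :
    ∃ Q : Matrix (Fin d₂) (Fin d₂) ℝ, Qᵀ = Q ∧ Q * Q = Q ∧ W * Q = 0 ∧ Q.trace = (m : ℝ) := by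
  refine ⟨Matrix.of fun i i' => ∑ j, v j i * v j i', ?_, ?_, ?_, ?_⟩
  · ext i i'
    simp only [Matrix.transpose_apply, Matrix.of_apply]
    exact Finset.sum_congr rfl fun j _ => mul_comm _ _
  · ext a b'
    simp only [Matrix.mul_apply, Matrix.of_apply]
    calc (∑ c, (∑ j, v j a * v j c) * ∑ j', v j' c * v j' b')
        = ∑ j, ∑ j', (v j a * v j' b') * (∑ c, v j c * v j' c) := by
          simp_rw [Finset.sum_mul, Finset.mul_sum]
          rw [Finset.sum_comm]
          refine Finset.sum_congr rfl fun j _ => ?_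
          rw [Finset.sum_comm]
          refine Finset.sum_congr rfl fun j' _ => ?_
          refine Finset.sum_congr rfl fun c _ => ?_
          ring
      _ = ∑ j, v j a * v j b' := by
          refine Finset.sum_congr rfl fun j _ => ?_
          rw [Finset.sum_eq_single j]
          · rw [horth j j]; simp
          · intro j' _ hj'; rw [horth j j']; simp [Ne.symm hj']
          · intro h; exact absurd (Finset.mem_univ j) h
  · ext a b'
    simp only [Matrix.mul_apply, Matrix.of_apply, Matrix.zero_apply]
    calc (∑ c, W a c * ∑ j, v j c * v j b')
        = ∑ j, v j b' * ∑ c, W a c * v j c := by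
          simp_rw [Finset.mul_sum]
          rw [Finset.sum_comm]
          refine Finset.sum_congr rfl fun j _ => ?_
          refine Finset.sum_congr rfl fun c _ => ?_
          ring
      _ = 0 := by
          apply Finset.sum_eq_zero; intro j _
          have := congrFun (hker j) a
          simp only [Matrix.mulVec, dotProduct, Pi.zero_apply] at this
          rw [this, mul_zero]
  · rw [Matrix.trace]
    simp only [Matrix.diag_apply, Matrix.of_apply]
    rw [Finset.sum_comm]
    have h1 : ∀ j, (∑ i, v j i * v j i) = 1 := by
      intro j; rw [horth j j]; simp
    rw [Finset.sum_congr rfl fun j _ => h1 j]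
    simp

lemma proj_of_submodule {d₁ d₂ : ℕ} (W : Matrix (Fin d₁) (Fin d₂) ℝ)
    (K : Submodule ℝ (EuclideanSpace ℝ (Fin d₂)))
    (hker : ∀ x ∈ K, W.mulVec (fun c => x c) = 0) :
    ∃ Q : Matrix (Fin d₂) (Fin d₂) ℝ, Qᵀ = Q ∧ Q * Q = Q ∧ W * Q = 0 ∧
      Q.trace = (Module.finrank ℝ K : ℝ) := by
  apply proj_of_family W (fun j => ((stdOrthonormalBasis ℝ K) j : EuclideanSpace ℝ (Fin d₂)))
  · intro j j'
    have h := (stdOrthonormalBasis ℝ K).orthonormal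
    rw [orthonormal_iff_ite] at h
    have h2 := h j j'
    rw [Submodule.coe_inner, PiLp.inner_apply] at h2
    rw [← h2]
    simp [RCLike.inner_apply, mul_comm]
  · intro j
    exact hker _ ((stdOrthonormalBasis ℝ K) j).2

lemma exists_ker_proj {d₁ d₂ : ℕ} (W : Matrix (Fin d₁) (Fin d₂) ℝ) :
    ∃ Q : Matrix (Fin d₂) (Fin d₂) ℝ, Qᵀ = Q ∧ Q * Q = Q ∧ W * Q = 0 ∧
      ∃ mQ : ℕ, Q.trace = (mQ : ℝ) ∧ W.rank + mQ = d₂ := by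
  classical
  obtain ⟨Q, hs, hi, hw, ht⟩ := proj_of_submodule W
    ((LinearMap.ker W.mulVecLin).map (WithLp.linearEquiv 2 ℝ (Fin d₂ → ℝ)).symm.toLinearMap)
    (by
      intro x hx
      obtain ⟨y, hy, hye⟩ := hx
      have hxx : (fun c => x c) = y := by
        funext c; rw [← hye]; rfl
      rw [hxx]
      exact hy)
  refine ⟨Q, hs, hi, hw, _, ht, ?_⟩
  have h1 : Module.finrank ℝ ((LinearMap.ker W.mulVecLin).map
      (WithLp.linearEquiv 2 ℝ (Fin d₂ → ℝ)).symm.toLinearMap) = Module.finrank ℝ (LinearMap.ker W.mulVecLin) :=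
    LinearEquiv.finrank_map_eq _ _
  have h2 := LinearMap.finrank_range_add_finrank_ker W.mulVecLin
  have h3 : Module.finrank ℝ (Fin d₂ → ℝ) = d₂ := by simp
  have h4 : W.rank = Module.finrank ℝ (LinearMap.range W.mulVecLin) := rfl
  rw [h1, h4]
  omega


lemma sym_idem_diag {n : Type*} [Fintype n] [DecidableEq n] (R : Matrix n n ℝ)
    (hs : Rᵀ = R) (hi : R * R = R) (i : n) : 0 ≤ R i i ∧ R i i ≤ 1 := by
  have h0 : ∀ (T : Matrix n n ℝ), Tᵀ = T → T * T = T → ∀ k, 0 ≤ T k k := by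
    intro T hts hti k
    have : T k k = ∑ c, (T k c) ^ 2 := by
      conv_lhs => rw [← hti]
      rw [Matrix.mul_apply]
      refine Finset.sum_congr rfl fun c _ => ?_
      have h' : T c k = T k c := by
        calc T c k = Tᵀ k c := (Matrix.transpose_apply T k c).symm
          _ = T k c := by rw [hts]
      rw [h']; ring
    rw [this]
    exact Finset.sum_nonneg fun c _ => sq_nonneg _
  refine ⟨h0 R hs hi i, ?_⟩
  have h1 : (1 - R : Matrix n n ℝ)ᵀ = 1 - R := by rw [Matrix.transpose_sub, Matrix.transpose_one, hs]
  have h2 : (1 - R) * (1 - R) = 1 - R := by simp [Matrix.sub_mul, Matrix.mul_sub, hi]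
  have := h0 (1 - R) h1 h2 i
  simp only [Matrix.sub_apply, Matrix.one_apply_eq] at this
  linarith

lemma trace_diagonal_mul' {n : Type*} [Fintype n] [DecidableEq n] (w : n → ℝ) (R : Matrix n n ℝ) :
    (Matrix.diagonal w * R).trace = ∑ i, w i * R i i := by
  rw [Matrix.trace]
  refine Finset.sum_congr rfl fun i _ => ?_
  rw [Matrix.diag_apply, Matrix.mul_apply]
  rw [Finset.sum_eq_single i]
  · simp
  · intro c _ hc; simp [Matrix.diagonal_apply_ne' w hc]
  · intro h; exact absurd (Finset.mem_univ i) h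

lemma trace_SQ {n : Type*} [Fintype n] [DecidableEq n] (S V : Matrix n n ℝ) (l : n → ℝ)
    (hV : V * Vᵀ = 1) (hV' : Vᵀ * V = 1) (hSpec : S = V * Matrix.diagonal l * Vᵀ)
    (Q : Matrix n n ℝ) (hQs : Qᵀ = Q) (hQi : Q * Q = Q) :
    ∃ t : n → ℝ, (S * Q).trace = ∑ i, l i * t i ∧ (∀ i, 0 ≤ t i) ∧ (∀ i, t i ≤ 1) ∧
      (∑ i, t i) = Q.trace := by
  set R := Vᵀ * Q * V with hR
  have hRs : Rᵀ = R := by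
    rw [hR, Matrix.transpose_mul, Matrix.transpose_mul, Matrix.transpose_transpose, hQs,
      Matrix.mul_assoc]
  have hRi : R * R = R := by
    rw [hR]
    calc Vᵀ * Q * V * (Vᵀ * Q * V) = Vᵀ * Q * (V * Vᵀ) * Q * V := by
          simp only [Matrix.mul_assoc]
      _ = Vᵀ * Q * Q * V := by rw [hV]; simp only [Matrix.mul_assoc, Matrix.one_mul]
      _ = Vᵀ * Q * V := by rw [Matrix.mul_assoc Vᵀ Q Q, hQi]
  have htr : (S * Q).trace = (Matrix.diagonal l * R).trace := by
    rw [hSpec, hR]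
    calc (V * Matrix.diagonal l * Vᵀ * Q).trace
        = (V * (Matrix.diagonal l * (Vᵀ * Q))).trace := by simp only [Matrix.mul_assoc]
      _ = ((Matrix.diagonal l * (Vᵀ * Q)) * V).trace := Matrix.trace_mul_comm _ _
      _ = (Matrix.diagonal l * (Vᵀ * Q * V)).trace := by simp only [Matrix.mul_assoc]
  have htrQ : R.trace = Q.trace := by
    rw [hR]
    calc (Vᵀ * Q * V).trace = (V * (Vᵀ * Q)).trace := Matrix.trace_mul_comm (Vᵀ * Q) V
      _ = Q.trace := by rw [← Matrix.mul_assoc, hV]; simp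
  refine ⟨fun i => R i i, ?_, fun i => (sym_idem_diag R hRs hRi i).1,
    fun i => (sym_idem_diag R hRs hRi i).2, ?_⟩
  · rw [htr, trace_diagonal_mul']
  · rw [← htrQ]; rfl


lemma card_filter_lt (n p : ℕ) (hp : p ≤ n) :
    (Finset.univ.filter (fun i : Fin n => (i : ℕ) < p)).card = p := by
  have h : (Finset.univ.filter (fun i : Fin n => (i : ℕ) < p)).card = (Finset.range p).card := by
    exact Finset.card_bij' (fun (i : Fin n) _ => (i : ℕ))
      (fun q hq => (⟨q, lt_of_lt_of_le (Finset.mem_range.mp hq) hp⟩ : Fin n))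
      (fun i hi => Finset.mem_range.mpr (Finset.mem_filter.mp hi).2)
      (fun q hq => by simp [Finset.mem_filter, Finset.mem_range.mp hq])
      (fun i hi => rfl) (fun q hq => rfl)
  rw [h, Finset.card_range]

lemma sum_mul_ge_tail {n k : ℕ} (μ : Fin n → ℝ) (hmono : Monotone μ) (hnn : ∀ i, 0 ≤ μ i)
    (t : Fin n → ℝ) (ht0 : ∀ i, 0 ≤ t i) (ht1 : ∀ i, t i ≤ 1)
    (hsum : (n : ℝ) - k ≤ ∑ i, t i) :
    ∑ i ∈ Finset.univ.filter (fun i : Fin n => (i : ℕ) < n - k), μ i ≤ ∑ i, μ i * t i := by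
  by_cases hnk : n ≤ k
  · have he : n - k = 0 := Nat.sub_eq_zero_of_le hnk
    rw [he]
    simp only [Nat.not_lt_zero, Finset.filter_false, Finset.sum_empty]
    exact Finset.sum_nonneg fun i _ => mul_nonneg (hnn i) (ht0 i)
  · push_neg at hnk
    set p := n - k with hp
    have hp0 : 0 < p := by omega
    have hpn : p ≤ n := by omega
    set c := μ ⟨p - 1, by omega⟩ with hc
    have hc0 : 0 ≤ c := hnn _
    set A := Finset.univ.filter (fun i : Fin n => (i : ℕ) < p) with hA
    have hcardA : A.card = p := card_filter_lt n p hpn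
    have hcle : ∀ i ∈ A, c ≤ μ i → True := fun _ _ _ => trivial
    -- split total sum
    have hsplit : (∑ i, μ i * t i) =
        (∑ i ∈ A, μ i * t i) + ∑ i ∈ Finset.univ.filter (fun i : Fin n => ¬ ((i : ℕ) < p)), μ i * t i := by
      rw [hA, Finset.sum_filter_add_sum_filter_not]
    have hsplitT : (∑ i, t i) =
        (∑ i ∈ A, t i) + ∑ i ∈ Finset.univ.filter (fun i : Fin n => ¬ ((i : ℕ) < p)), t i := by
      rw [hA, Finset.sum_filter_add_sum_filter_not]
    -- bound on A: μ i ≤ c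
    have h1 : ∀ i ∈ A, μ i * (1 - t i) ≤ c * (1 - t i) := by
      intro i hi
      have hi' : (i : ℕ) < p := (Finset.mem_filter.mp hi).2
      have : μ i ≤ c := hmono (by simp [Fin.le_def]; omega)
      exact mul_le_mul_of_nonneg_right this (by linarith [ht1 i])
    have h2 : ∀ i ∈ Finset.univ.filter (fun i : Fin n => ¬ ((i : ℕ) < p)), c * t i ≤ μ i * t i := by
      intro i hi
      have hi' : ¬ ((i : ℕ) < p) := (Finset.mem_filter.mp hi).2
      have : c ≤ μ i := hmono (by simp [Fin.le_def]; omega)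
      exact mul_le_mul_of_nonneg_right this (ht0 i)
    have H1 : (∑ i ∈ A, μ i * (1 - t i)) ≤ ∑ i ∈ A, c * (1 - t i) := Finset.sum_le_sum h1
    have H2 : (∑ i ∈ Finset.univ.filter (fun i : Fin n => ¬ ((i : ℕ) < p)), c * t i) ≤
        ∑ i ∈ Finset.univ.filter (fun i : Fin n => ¬ ((i : ℕ) < p)), μ i * t i :=
      Finset.sum_le_sum h2
    have e1 : (∑ i ∈ A, μ i * (1 - t i)) = (∑ i ∈ A, μ i) - ∑ i ∈ A, μ i * t i := by
      rw [← Finset.sum_sub_distrib]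
      exact Finset.sum_congr rfl fun i _ => by ring
    have e2 : (∑ i ∈ A, c * (1 - t i)) = c * (A.card : ℝ) - c * ∑ i ∈ A, t i := by
      have hterm : ∀ i ∈ A, c * (1 - t i) = c - c * t i := fun i _ => by ring
      rw [Finset.sum_congr rfl hterm, Finset.sum_sub_distrib, Finset.sum_const, Finset.mul_sum]
      simp [nsmul_eq_mul, mul_comm]
    have e3 : (∑ i ∈ Finset.univ.filter (fun i : Fin n => ¬ ((i : ℕ) < p)), c * t i) =
        c * ∑ i ∈ Finset.univ.filter (fun i : Fin n => ¬ ((i : ℕ) < p)), t i := by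
      rw [Finset.mul_sum]
    have hpreal : ((p : ℝ)) ≤ (∑ i, t i) := by
      have : ((n : ℝ) - k) = (p : ℝ) ∨ (n : ℝ) - k ≥ p := by
        left
        rw [hp, Nat.cast_sub (le_of_lt hnk)]
      rcases this with h | h
      · linarith [hsum]
      · linarith [hsum]
    have key : c * ((A.card : ℝ)) - c * ∑ i ∈ A, t i ≤
        c * ∑ i ∈ Finset.univ.filter (fun i : Fin n => ¬ ((i : ℕ) < p)), t i := by
      have : c * ((A.card : ℝ) - ∑ i ∈ A, t i) ≤
          c * ∑ i ∈ Finset.univ.filter (fun i : Fin n => ¬ ((i : ℕ) < p)), t i := by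
        apply mul_le_mul_of_nonneg_left _ hc0
        rw [hcardA]
        linarith [hsplitT, hpreal]
      linarith [this]
    linarith [H1, H2, e1, e2, e3, key, hsplit]


lemma tail_reindex {n : ℕ} (μ : Fin n → ℝ) (k : ℕ) :
    ∑ i ∈ Finset.univ.filter (fun i : Fin n => (i : ℕ) < n - k), μ i
      = ∑ q ∈ Finset.Ico k n, (if h : q < n then μ ⟨n - 1 - q, by omega⟩ else 0) := by
  by_cases hkn : n ≤ k
  · have h1 : n - k = 0 := by omega
    have h2 : Finset.Ico k n = ∅ := Finset.Ico_eq_empty (by omega)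
    rw [h1, h2]
    simp
  · push_neg at hkn
    refine Finset.sum_bij' (fun (j : Fin n) _ => n - 1 - (j : ℕ))
      (fun q hq => (⟨n - 1 - q, by omega⟩ : Fin n)) ?_ ?_ ?_ ?_ ?_
    · intro j hj
      have := (Finset.mem_filter.mp hj).2
      rw [Finset.mem_Ico]
      omega
    · intro q hq
      have := Finset.mem_Ico.mp hq
      rw [Finset.mem_filter]
      exact ⟨Finset.mem_univ _, by simp; omega⟩
    · intro j hj
      have := (Finset.mem_filter.mp hj).2
      ext
      simp
      omega
    · intro q hq
      have := Finset.mem_Ico.mp hq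
      simp
      omega
    · intro j hj
      have hj2 := (Finset.mem_filter.mp hj).2
      have hq : n - 1 - (j : ℕ) < n := by omega
      rw [dif_pos hq]
      congr 1
      ext
      simp
      omega

lemma ico_ext (ν : ℕ → ℝ) (k a b : ℕ) (h : ∀ q, min a b ≤ q → ν q = 0) :
    ∑ q ∈ Finset.Ico k a, ν q = ∑ q ∈ Finset.Ico k b, ν q := by
  have key : ∀ c, min a b ≤ c →
      ∑ q ∈ Finset.Ico k c, ν q = ∑ q ∈ Finset.Ico k (min a b), ν q := by
    intro c hc
    refine (Finset.sum_subset (Finset.Ico_subset_Ico le_rfl hc) ?_).symm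
    intro q hq hq2
    apply h
    have h1 := Finset.mem_Ico.mp hq
    by_contra hlt
    push_neg at hlt
    exact hq2 (Finset.mem_Ico.mpr ⟨h1.1, lt_of_lt_of_le hlt (le_refl _)⟩)
  rw [key a (min_le_left a b), key b (min_le_right a b)]

lemma ico_avg (r₀ r₁ r₂ : ℕ) (h12 : r₁ < r₂) (h20 : r₂ < r₀) (ν : ℕ → ℝ)
    (hanti : ∀ a b, a ≤ b → ν b ≤ ν a) (hnn : ∀ q, 0 ≤ ν q) :
    (∑ q ∈ Finset.Ico r₂ r₀, ν q) * ((r₀ : ℝ) - r₁) ≤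
      (∑ q ∈ Finset.Ico r₁ r₀, ν q) * ((r₀ : ℝ) - r₂) := by
  have hB : (∑ q ∈ Finset.Ico r₂ r₀, ν q) ≤ ((r₀ - r₂ : ℕ) : ℝ) * ν r₂ := by
    have := Finset.sum_le_card_nsmul (Finset.Ico r₂ r₀) ν (ν r₂)
      (fun q hq => hanti r₂ q (Finset.mem_Ico.mp hq).1)
    rwa [Nat.card_Ico, nsmul_eq_mul] at this
  have hA : ((r₂ - r₁ : ℕ) : ℝ) * ν r₂ ≤ ∑ q ∈ Finset.Ico r₁ r₂, ν q := by
    have := Finset.card_nsmul_le_sum (Finset.Ico r₁ r₂) ν (ν r₂)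
      (fun q hq => hanti q r₂ (le_of_lt (Finset.mem_Ico.mp hq).2))
    rwa [Nat.card_Ico, nsmul_eq_mul] at this
  have hsplit : (∑ q ∈ Finset.Ico r₁ r₂, ν q) + ∑ q ∈ Finset.Ico r₂ r₀, ν q
      = ∑ q ∈ Finset.Ico r₁ r₀, ν q :=
    Finset.sum_Ico_consecutive ν (le_of_lt h12) (le_of_lt h20)
  have hc1 : ((r₀ - r₂ : ℕ) : ℝ) = (r₀ : ℝ) - r₂ := by
    rw [Nat.cast_sub (le_of_lt h20)]
  have hc2 : ((r₂ - r₁ : ℕ) : ℝ) = (r₂ : ℝ) - r₁ := by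
    rw [Nat.cast_sub (le_of_lt h12)]
  rw [hc1] at hB
  rw [hc2] at hA
  have h1 : (0:ℝ) ≤ (r₂ : ℝ) - r₁ := by
    have : (r₁:ℝ) ≤ r₂ := Nat.cast_le.mpr h12.le
    linarith
  have h2 : (0:ℝ) ≤ (r₀ : ℝ) - r₂ := by
    have : (r₂:ℝ) ≤ r₀ := Nat.cast_le.mpr h20.le
    linarith
  nlinarith [mul_le_mul_of_nonneg_right hB h1, mul_le_mul_of_nonneg_left hA h2,
    Finset.sum_nonneg (fun q (_ : q ∈ Finset.Ico r₂ r₀) => hnn q)]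

lemma mu_zero {n : ℕ} (μ : Fin n → ℝ) (hmono : Monotone μ) (hnn : ∀ i, 0 ≤ μ i) (r : ℕ)
    (hcard : Fintype.card {i // μ i ≠ 0} ≤ r) :
    ∀ j : Fin n, (j : ℕ) < n - r → μ j = 0 := by
  intro j hj
  by_contra hne
  have hpos : 0 < μ j := lt_of_le_of_ne (hnn j) (Ne.symm hne)
  have hsub : Finset.univ.filter (fun i : Fin n => ¬ ((i : ℕ) < (j : ℕ))) ⊆
      Finset.univ.filter (fun i : Fin n => μ i ≠ 0) := by
    intro i hi
    have hi2 := (Finset.mem_filter.mp hi).2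
    rw [Finset.mem_filter]
    refine ⟨Finset.mem_univ _, ?_⟩
    have : μ j ≤ μ i := hmono (by rw [Fin.le_def]; omega)
    intro h0
    rw [h0] at this
    linarith
  have hcard2 := Finset.card_le_card hsub
  have hcc := Finset.card_filter_add_card_filter_not
    (s := (Finset.univ : Finset (Fin n))) (fun i : Fin n => (i : ℕ) < (j : ℕ))
  have hlt : (Finset.univ.filter (fun i : Fin n => (i : ℕ) < (j : ℕ))).card = (j : ℕ) :=
    card_filter_lt n j (le_of_lt j.2)
  have hcu : (Finset.univ : Finset (Fin n)).card = n := by simp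
  have hcs : Fintype.card {i // μ i ≠ 0} =
      (Finset.univ.filter (fun i : Fin n => μ i ≠ 0)).card := Fintype.card_subtype _
  omega

theorem stmt2 {d₁ d₂ : ℕ} (r₀ r₁ r₂ : ℕ) (h12 : r₁ < r₂) (h20 : r₂ < r₀)
    (Z Y P : Matrix (Fin d₁) (Fin d₂) ℝ)
    (hZ : Z.rank ≤ r₀) (hY : Y.rank ≤ r₁)
    (hPrank : P.rank ≤ r₂)
    (hPbest : ∀ W : Matrix (Fin d₁) (Fin d₂) ℝ, W.rank ≤ r₂ →
      frob (Z - P) ≤ frob (Z - W)) :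
    frob (P - Z) ≤
      Real.sqrt (((r₀ - r₂ : ℕ) : ℝ) / ((r₀ - r₁ : ℕ) : ℝ)) * frob (Y - Z) := by
  classical
  have hS : (Zᵀ * Z).IsHermitian := by
    have := Matrix.isHermitian_conjTranspose_mul_self Z
    rwa [Matrix.conjTranspose_eq_transpose_of_trivial] at this
  set S := Zᵀ * Z with hSdef
  set l := hS.eigenvalues with hldef
  have hl0 : ∀ i, 0 ≤ l i := by
    intro i
    exact (Matrix.posSemidef_conjTranspose_mul_self Z).eigenvalues_nonneg i
  set V : Matrix (Fin d₂) (Fin d₂) ℝ := (hS.eigenvectorUnitary : Matrix (Fin d₂) (Fin d₂) ℝ)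
    with hVdef
  have hVVt : V * Vᵀ = 1 := by
    have h := Matrix.mem_unitaryGroup_iff.mp hS.eigenvectorUnitary.2
    rwa [Matrix.star_eq_conjTranspose, Matrix.conjTranspose_eq_transpose_of_trivial] at h
  have hVtV : Vᵀ * V = 1 := by
    have h := Matrix.mem_unitaryGroup_iff'.mp hS.eigenvectorUnitary.2
    rwa [Matrix.star_eq_conjTranspose, Matrix.conjTranspose_eq_transpose_of_trivial] at h
  have hSpec : S = V * Matrix.diagonal l * Vᵀ := by
    have h := hS.spectral_theorem
    rwa [Unitary.conjStarAlgAut_apply, Matrix.star_eq_conjTranspose,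
      Matrix.conjTranspose_eq_transpose_of_trivial,
      (show (RCLike.ofReal ∘ hS.eigenvalues : Fin d₂ → ℝ) = l by ext i; simp [hldef])] at h
  set σ := Tuple.sort l with hσdef
  set μ : Fin d₂ → ℝ := l ∘ σ with hμdef
  have hμmono : Monotone μ := Tuple.monotone_sort l
  have hμnn : ∀ j, 0 ≤ μ j := fun j => hl0 _
  have hcard : Fintype.card {i // μ i ≠ 0} ≤ r₀ := by
    have h1 : S.rank = Fintype.card {i // l i ≠ 0} := hS.rank_eq_card_non_zero_eigs
    have h2 : S.rank = Z.rank := Matrix.rank_transpose_mul_self Z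
    have h3 : Fintype.card {i // μ i ≠ 0} = Fintype.card {i // l i ≠ 0} :=
      Fintype.card_congr (Equiv.subtypeEquiv σ (fun j => Iff.rfl))
    omega
  set ν : ℕ → ℝ := fun q => if h : q < d₂ then μ ⟨d₂ - 1 - q, by omega⟩ else 0 with hνdef
  have hνeq : ∀ q, (if h : q < d₂ then μ ⟨d₂ - 1 - q, by omega⟩ else 0) = ν q := fun q => rfl
  have hνnn : ∀ q, 0 ≤ ν q := by
    intro q
    rw [hνdef]
    dsimp only
    split
    · exact hμnn _
    · exact le_refl 0
  have hνanti : ∀ a b, a ≤ b → ν b ≤ ν a := by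
    intro a b hab
    rw [hνdef]
    dsimp only
    by_cases hb : b < d₂
    · rw [dif_pos hb, dif_pos (by omega : a < d₂)]
      exact hμmono (by simp [Fin.le_def]; omega)
    · rw [dif_neg hb]
      split
      · exact hμnn _
      · exact le_refl 0
  have hνzero : ∀ q, min d₂ r₀ ≤ q → ν q = 0 := by
    intro q hq
    rw [hνdef]
    dsimp only
    by_cases hqd : q < d₂
    · rw [dif_pos hqd]
      apply mu_zero μ hμmono hμnn r₀ hcard
      simp only [min_le_iff] at hq
      rcases hq with h | h
      · omega
      · simp; omega
    · rw [dif_neg hqd]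
  -- lower bound
  have hlow : (∑ q ∈ Finset.Ico r₁ d₂, ν q) ≤ frobSq (Z - Y) := by
    obtain ⟨Q, hQs, hQi, hQY, mQ, htr, hrk⟩ := exists_ker_proj Y
    obtain ⟨t, htr2, ht0, ht1, hts⟩ := trace_SQ S V l hVVt hVtV hSpec Q hQs hQi
    have e1 : (Z - Y) * Q = Z * Q := by rw [Matrix.sub_mul, hQY, sub_zero]
    have e2 : frobSq ((Z - Y) * Q) ≤ frobSq (Z - Y) := frobSq_mul_proj_le _ Q hQs hQi
    have e3 : frobSq (Z * Q) = (S * Q).trace := frobSq_mul_proj Z Q hQs hQi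
    have e4 : (∑ i, l i * t i) = ∑ j, μ j * t (σ j) :=
      (Equiv.sum_comp σ (fun i => l i * t i)).symm
    have e5 : (d₂ : ℝ) - r₁ ≤ ∑ j, t (σ j) := by
      rw [Equiv.sum_comp σ t, hts, htr]
      have hYr : (Y.rank : ℝ) ≤ r₁ := Nat.cast_le.mpr hY
      have hc : (Y.rank : ℝ) + mQ = d₂ := by exact_mod_cast hrk
      linarith
    have e6 := sum_mul_ge_tail μ hμmono hμnn (fun j => t (σ j))
      (fun j => ht0 _) (fun j => ht1 _) e5
    rw [tail_reindex μ r₁] at e6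
    have e7 : (∑ q ∈ Finset.Ico r₁ d₂,
        (if h : q < d₂ then μ ⟨d₂ - 1 - q, by omega⟩ else 0)) = ∑ q ∈ Finset.Ico r₁ d₂, ν q :=
      Finset.sum_congr rfl fun q _ => hνeq q
    rw [e7] at e6
    have e8 : (∑ j, μ j * t (σ j)) = (S * Q).trace := by rw [← e4, htr2]
    rw [e1] at e2
    rw [e3] at e2
    linarith
  -- upper bound
  have hup : frobSq (Z - P) ≤ ∑ q ∈ Finset.Ico r₂ d₂, ν q := by
    set c : Fin d₂ → ℝ := fun i => if d₂ - r₂ ≤ ((σ.symm i : Fin d₂) : ℕ) then 1 else 0 with hcdef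
    set Q₀ : Matrix (Fin d₂) (Fin d₂) ℝ := V * Matrix.diagonal c * Vᵀ with hQ₀def
    have hcfun : (fun i => c i * c i) = c := by
      funext i
      rw [hcdef]
      dsimp only
      split <;> norm_num
    have hcc : Matrix.diagonal c * Matrix.diagonal c = Matrix.diagonal c := by
      rw [Matrix.diagonal_mul_diagonal, hcfun]
    have hQ₀s : Q₀ᵀ = Q₀ := by
      rw [hQ₀def, Matrix.transpose_mul, Matrix.transpose_mul, Matrix.transpose_transpose,
        Matrix.diagonal_transpose, Matrix.mul_assoc]
    have hQ₀i : Q₀ * Q₀ = Q₀ := by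
      rw [hQ₀def]
      calc V * Matrix.diagonal c * Vᵀ * (V * Matrix.diagonal c * Vᵀ)
          = V * Matrix.diagonal c * (Vᵀ * V) * Matrix.diagonal c * Vᵀ := by
            simp only [Matrix.mul_assoc]
        _ = V * Matrix.diagonal c * Vᵀ := by
            rw [hVtV]
            simp only [Matrix.mul_one, Matrix.mul_assoc, hcc]
    have hrank : (Z * Q₀).rank ≤ r₂ := by
      have hr1 : Z * Q₀ = (Z * V * Matrix.diagonal c) * Vᵀ := by
        rw [hQ₀def]; simp only [Matrix.mul_assoc]
      have hr2 : (Z * Q₀).rank ≤ (Matrix.diagonal c).rank := by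
        rw [hr1]
        calc ((Z * V * Matrix.diagonal c) * Vᵀ).rank ≤ (Z * V * Matrix.diagonal c).rank :=
              Matrix.rank_mul_le_left _ _
          _ ≤ (Matrix.diagonal c).rank := Matrix.rank_mul_le_right _ _
      have hr3 : (Matrix.diagonal c).rank = Fintype.card {i // c i ≠ 0} := Matrix.rank_diagonal c
      have hr4 : Fintype.card {i // c i ≠ 0} =
          Fintype.card {j : Fin d₂ // c (σ j) ≠ 0} :=
        (Fintype.card_congr (Equiv.subtypeEquiv σ (fun j => Iff.rfl))).symm
      have hr5 : ∀ j : Fin d₂, c (σ j) ≠ 0 ↔ ¬ ((j : ℕ) < d₂ - r₂) := by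
        intro j
        rw [hcdef]
        dsimp only
        rw [Equiv.symm_apply_apply]
        constructor
        · intro h hlt
          rw [if_neg (by omega)] at h
          exact h rfl
        · intro h
          rw [if_pos (by omega)]
          norm_num
      have hr6 : Fintype.card {j : Fin d₂ // c (σ j) ≠ 0} =
          (Finset.univ.filter (fun j : Fin d₂ => ¬ ((j : ℕ) < d₂ - r₂))).card := by
        rw [Fintype.card_subtype]
        congr 1
        apply Finset.filter_congr
        intro j _
        simp only [hr5 j]
      have hr7 := Finset.card_filter_add_card_filter_not
        (s := (Finset.univ : Finset (Fin d₂))) (fun j : Fin d₂ => (j : ℕ) < d₂ - r₂)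
      have hr8 : (Finset.univ.filter (fun j : Fin d₂ => (j : ℕ) < d₂ - r₂)).card = d₂ - r₂ :=
        card_filter_lt d₂ (d₂ - r₂) (by omega)
      have hr9 : (Finset.univ : Finset (Fin d₂)).card = d₂ := by simp
      omega
    have hW := hPbest (Z * Q₀) hrank
    have hWsq : frobSq (Z - P) ≤ frobSq (Z - Z * Q₀) := by
      rw [frob_eq, frob_eq] at hW
      exact (Real.sqrt_le_sqrt_iff (frobSq_nonneg _)).mp hW
    have e0 : Z - Z * Q₀ = Z * (1 - Q₀) := by rw [Matrix.mul_sub, Matrix.mul_one]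
    have h1s : (1 - Q₀ : Matrix (Fin d₂) (Fin d₂) ℝ)ᵀ = 1 - Q₀ := by
      rw [Matrix.transpose_sub, Matrix.transpose_one, hQ₀s]
    have h1i : (1 - Q₀) * (1 - Q₀) = (1 - Q₀ : Matrix (Fin d₂) (Fin d₂) ℝ) := by
      simp [Matrix.sub_mul, Matrix.mul_sub, hQ₀i]
    have e3 : frobSq (Z * (1 - Q₀)) = (S * (1 - Q₀)).trace := frobSq_mul_proj Z _ h1s h1i
    have htrS : S.trace = ∑ i, l i := by
      rw [hSpec]
      calc (V * Matrix.diagonal l * Vᵀ).trace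
          = ((Matrix.diagonal l * Vᵀ) * V).trace := by
            rw [Matrix.mul_assoc]; exact Matrix.trace_mul_comm V (Matrix.diagonal l * Vᵀ)
        _ = (Matrix.diagonal l * (Vᵀ * V)).trace := by rw [Matrix.mul_assoc]
        _ = ∑ i, l i := by rw [hVtV, Matrix.mul_one, Matrix.trace_diagonal]
    have htrSQ : (S * Q₀).trace = ∑ i, l i * c i := by
      have hSQ : S * Q₀ = V * (Matrix.diagonal l * Matrix.diagonal c) * Vᵀ := by
        rw [hSpec, hQ₀def]
        calc V * Matrix.diagonal l * Vᵀ * (V * Matrix.diagonal c * Vᵀ)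
            = V * Matrix.diagonal l * (Vᵀ * V) * Matrix.diagonal c * Vᵀ := by
              simp only [Matrix.mul_assoc]
          _ = V * (Matrix.diagonal l * Matrix.diagonal c) * Vᵀ := by
              rw [hVtV]
              simp only [Matrix.mul_one, Matrix.mul_assoc]
      rw [hSQ]
      calc (V * (Matrix.diagonal l * Matrix.diagonal c) * Vᵀ).trace
          = (((Matrix.diagonal l * Matrix.diagonal c) * Vᵀ) * V).trace := by
            rw [Matrix.mul_assoc]
            exact Matrix.trace_mul_comm V ((Matrix.diagonal l * Matrix.diagonal c) * Vᵀ)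
        _ = ((Matrix.diagonal l * Matrix.diagonal c) * (Vᵀ * V)).trace := by
            rw [Matrix.mul_assoc]
        _ = ∑ i, l i * c i := by
            rw [hVtV, Matrix.mul_one, Matrix.diagonal_mul_diagonal, Matrix.trace_diagonal]
    have etr : (S * (1 - Q₀)).trace = ∑ i, l i * (1 - c i) := by
      rw [Matrix.mul_sub, Matrix.mul_one, Matrix.trace_sub, htrS, htrSQ,
        ← Finset.sum_sub_distrib]
      exact Finset.sum_congr rfl fun i _ => by ring
    have esum : (∑ i, l i * (1 - c i)) =
        ∑ j ∈ Finset.univ.filter (fun j : Fin d₂ => (j : ℕ) < d₂ - r₂), μ j := by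
      rw [← Equiv.sum_comp σ (fun i => l i * (1 - c i))]
      have hterm : ∀ j : Fin d₂, l (σ j) * (1 - c (σ j)) =
          if (j : ℕ) < d₂ - r₂ then μ j else 0 := by
        intro j
        rw [hcdef]
        dsimp only
        rw [Equiv.symm_apply_apply]
        by_cases hj : (j : ℕ) < d₂ - r₂
        · rw [if_neg (by omega), if_pos hj]
          simp [hμdef]
        · rw [if_pos (by omega), if_neg hj]
          ring
      rw [Finset.sum_congr rfl (fun j _ => hterm j), ← Finset.sum_filter]
    rw [e0] at hWsq
    rw [e3, etr, esum, tail_reindex μ r₂] at hWsq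
    have e7 : (∑ q ∈ Finset.Ico r₂ d₂,
        (if h : q < d₂ then μ ⟨d₂ - 1 - q, by omega⟩ else 0)) = ∑ q ∈ Finset.Ico r₂ d₂, ν q :=
      Finset.sum_congr rfl fun q _ => hνeq q
    rwa [e7] at hWsq
  -- combine
  have hico2 : (∑ q ∈ Finset.Ico r₂ d₂, ν q) = ∑ q ∈ Finset.Ico r₂ r₀, ν q :=
    ico_ext ν r₂ d₂ r₀ hνzero
  have hico1 : (∑ q ∈ Finset.Ico r₁ d₂, ν q) = ∑ q ∈ Finset.Ico r₁ r₀, ν q :=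
    ico_ext ν r₁ d₂ r₀ hνzero
  have havg := ico_avg r₀ r₁ r₂ h12 h20 ν hνanti hνnn
  have hr01 : (0:ℝ) < (r₀ : ℝ) - r₁ := by
    have : (r₁ : ℝ) < r₀ := Nat.cast_lt.mpr (h12.trans h20)
    linarith
  have hr02 : (0:ℝ) ≤ (r₀ : ℝ) - r₂ := by
    have : (r₂ : ℝ) ≤ r₀ := Nat.cast_le.mpr h20.le
    linarith
  have hkey : frobSq (Z - P) * ((r₀ : ℝ) - r₁) ≤ frobSq (Y - Z) * ((r₀ : ℝ) - r₂) := by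
    have hG : frobSq (Z - Y) = frobSq (Y - Z) := frobSq_neg_sub _ _
    have h1 : frobSq (Z - P) ≤ ∑ q ∈ Finset.Ico r₂ r₀, ν q := by rw [← hico2]; exact hup
    have h2 : (∑ q ∈ Finset.Ico r₁ r₀, ν q) ≤ frobSq (Y - Z) := by
      rw [← hico1, ← hG]; exact hlow
    nlinarith [mul_le_mul_of_nonneg_right h1 hr01.le,
      mul_le_mul_of_nonneg_right h2 hr02]
  -- conclude
  have hcast : (((r₀ - r₂ : ℕ) : ℝ)) / (((r₀ - r₁ : ℕ) : ℝ)) =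
      ((r₀ : ℝ) - r₂) / ((r₀ : ℝ) - r₁) := by
    rw [Nat.cast_sub h20.le, Nat.cast_sub (h12.trans h20).le]
  rw [hcast, frob_eq, frob_eq, ← Real.sqrt_mul (by positivity)]
  apply Real.sqrt_le_sqrt
  have hPZ : frobSq (P - Z) = frobSq (Z - P) := frobSq_neg_sub _ _
  rw [hPZ, div_mul_eq_mul_div, le_div_iff₀ hr01]
  calc frobSq (Z - P) * ((r₀ : ℝ) - r₁) ≤ frobSq (Y - Z) * ((r₀ : ℝ) - r₂) := hkey
    _ = ((r₀ : ℝ) - r₂) * frobSq (Y - Z) := by ring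
end

section
/- For a vector v ∈ R^d and s ≤ d, let P̃_s(v) denote the best s-sparse approximation of v in ℓ₂ norm (keeping the s largest-magnitude entries). Then for any s₁ < s₂ < s₀, any vector z ∈ R^d with at most s₀ nonzero entries, and any vector y with at most s₁ nonzero entries: ‖P̃_{s₂}(z) − z‖₂ ≤ sqrt((s₀−s₂)/(s₀−s₁)) · ‖y − z‖₂. -/
lemma exists_min_subset {ι : Type*} [DecidableEq ι] (f : ι → ℝ) :
    ∀ (k : ℕ) (S : Finset ι), k ≤ S.card →
    ∃ B ⊆ S, B.card = k ∧ ∀ i ∈ B, ∀ j ∈ S \ B, f i ≤ f j := by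
  intro k
  induction k with
  | zero => intro S _; exact ⟨∅, Finset.empty_subset _, rfl, by simp⟩
  | succ k ih =>
    intro S hk
    have hS : S.Nonempty := Finset.card_pos.mp (by omega)
    obtain ⟨i₀, hi₀S, hmin⟩ := S.exists_min_image f hS
    obtain ⟨B', hB'sub, hB'card, hB'min⟩ := ih (S.erase i₀) (by
      rw [Finset.card_erase_of_mem hi₀S]; omega)
    have hi₀B' : i₀ ∉ B' := fun h => (Finset.mem_erase.mp (hB'sub h)).1 rfl
    refine ⟨insert i₀ B', ?_, ?_, ?_⟩
    · exact Finset.insert_subset hi₀S (hB'sub.trans (Finset.erase_subset _ _))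
    · rw [Finset.card_insert_of_notMem hi₀B', hB'card]
    · intro i hi j hj
      obtain ⟨hjS, hjB⟩ := Finset.mem_sdiff.mp hj
      rcases Finset.mem_insert.mp hi with rfl | hi
      · exact hmin j hjS
      · refine hB'min i hi j (Finset.mem_sdiff.mpr ⟨Finset.mem_erase.mpr ⟨?_, hjS⟩, ?_⟩)
        · intro h; exact hjB (h ▸ Finset.mem_insert_self _ _)
        · intro h; exact hjB (Finset.mem_insert_of_mem h)

lemma sum_min_le {ι : Type*} [DecidableEq ι] (f : ι → ℝ) (S B : Finset ι)
    (hBS : B ⊆ S) (hmin : ∀ i ∈ B, ∀ j ∈ S \ B, f i ≤ f j) :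
    (S.card : ℝ) * ∑ i ∈ B, f i ≤ (B.card : ℝ) * ∑ i ∈ S, f i := by
  have h1 : ∀ j ∈ S \ B, ∑ i ∈ B, f i ≤ (B.card : ℝ) * f j := by
    intro j hj
    calc ∑ i ∈ B, f i ≤ ∑ i ∈ B, f j := Finset.sum_le_sum (fun i hi => hmin i hi j hj)
    _ = (B.card : ℝ) * f j := by rw [Finset.sum_const, nsmul_eq_mul]
  have h2 : ((S \ B).card : ℝ) * ∑ i ∈ B, f i ≤ (B.card : ℝ) * ∑ j ∈ S \ B, f j := by
    calc ((S \ B).card : ℝ) * ∑ i ∈ B, f i = ∑ _j ∈ S \ B, ∑ i ∈ B, f i := by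
          rw [Finset.sum_const, nsmul_eq_mul]
      _ ≤ ∑ j ∈ S \ B, (B.card : ℝ) * f j := Finset.sum_le_sum h1
      _ = (B.card : ℝ) * ∑ j ∈ S \ B, f j := by rw [Finset.mul_sum]
  have hsplit : ∑ i ∈ S, f i = ∑ i ∈ B, f i + ∑ i ∈ S \ B, f i := by
    rw [add_comm, Finset.sum_sdiff hBS]
  have hcard : (S.card : ℝ) = (B.card : ℝ) + ((S \ B).card : ℝ) := by
    rw [← Nat.cast_add]
    norm_cast
    rw [Finset.card_sdiff_of_subset hBS]
    have := Finset.card_le_card hBS; omega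
  calc (S.card : ℝ) * ∑ i ∈ B, f i
      = (B.card : ℝ) * ∑ i ∈ B, f i + ((S \ B).card : ℝ) * ∑ i ∈ B, f i := by
        rw [hcard]; ring
    _ ≤ (B.card : ℝ) * ∑ i ∈ B, f i + (B.card : ℝ) * ∑ j ∈ S \ B, f j :=
        add_le_add le_rfl h2
    _ = (B.card : ℝ) * ∑ i ∈ S, f i := by rw [hsplit]; ring

/-- Euclidean norm of a vector in ℝ^d. -/
noncomputable def l2 {d : ℕ} (v : Fin d → ℝ) : ℝ :=
  Real.sqrt (∑ i, (v i) ^ 2)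

theorem stmt3 {d : ℕ} (s₀ s₁ s₂ : ℕ) (h12 : s₁ < s₂) (h20 : s₂ < s₀)
    (z y p : Fin d → ℝ)
    (hz : {i | z i ≠ 0}.ncard ≤ s₀) (hy : {i | y i ≠ 0}.ncard ≤ s₁)
    (hp : {i | p i ≠ 0}.ncard ≤ s₂)
    (hbest : ∀ w : Fin d → ℝ, {i | w i ≠ 0}.ncard ≤ s₂ → l2 (z - p) ≤ l2 (z - w)) :
    l2 (p - z) ≤
      Real.sqrt (((s₀ - s₂ : ℕ) : ℝ) / ((s₀ - s₁ : ℕ) : ℝ)) * l2 (y - z) := by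
  classical
  set A : Finset (Fin d) := Finset.univ.filter (fun i => z i ≠ 0) with hA
  set Y : Finset (Fin d) := Finset.univ.filter (fun i => y i ≠ 0) with hY
  have hAset : {i | z i ≠ 0} = ↑A := by ext i; simp [hA]
  have hYset : {i | y i ≠ 0} = ↑Y := by ext i; simp [hY]
  have hAcard : A.card ≤ s₀ := by rwa [hAset, Set.ncard_coe_finset] at hz
  have hYcard : Y.card ≤ s₁ := by rwa [hYset, Set.ncard_coe_finset] at hy
  have lsym : l2 (p - z) = l2 (z - p) := by
    unfold l2; congr 1
    exact Finset.sum_congr rfl (fun i _ => by simp only [Pi.sub_apply]; ring)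
  have hl2nonneg : ∀ v : Fin d → ℝ, 0 ≤ l2 v := fun v => Real.sqrt_nonneg _
  rw [lsym]
  by_cases hcase : A.card ≤ s₂
  · have h0 : l2 (z - p) ≤ 0 := by
      have := hbest z (by rw [hAset, Set.ncard_coe_finset]; exact hcase)
      simpa [l2, sub_self] using this
    calc l2 (z - p) ≤ 0 := h0
      _ ≤ _ := mul_nonneg (Real.sqrt_nonneg _) (hl2nonneg _)
  · push_neg at hcase
    set S : Finset (Fin d) := A \ Y with hSdef
    set k : ℕ := A.card - s₂ with hkdef
    have hScard : A.card - s₁ ≤ S.card := by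
      have hsub : A ⊆ S ∪ Y := by
        intro i hi
        by_cases hiY : i ∈ Y
        · exact Finset.mem_union_right _ hiY
        · exact Finset.mem_union_left _ (Finset.mem_sdiff.mpr ⟨hi, hiY⟩)
      have := (Finset.card_le_card hsub).trans (Finset.card_union_le S Y)
      omega
    have hkS : k ≤ S.card := by omega
    obtain ⟨B, hBS, hBcard, hBmin⟩ := exists_min_subset (fun i => z i ^ 2) k S hkS
    have hBA : B ⊆ A := hBS.trans (Finset.sdiff_subset)
    set w : Fin d → ℝ := fun i => if i ∈ A \ B then z i else 0 with hw
    have hwsupp : {i | w i ≠ 0}.ncard ≤ s₂ := by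
      have h1 : {i | w i ≠ 0} ⊆ ↑(A \ B) := by
        intro i hi
        simp only [Set.mem_setOf_eq, hw] at hi
        by_contra h
        exact hi (if_neg (by simpa using h))
      calc {i | w i ≠ 0}.ncard ≤ (↑(A \ B) : Set (Fin d)).ncard :=
            Set.ncard_le_ncard h1 (Set.toFinite _)
        _ = (A \ B).card := Set.ncard_coe_finset _
        _ ≤ s₂ := by rw [Finset.card_sdiff_of_subset hBA, hBcard]; omega
    have hzw : ∑ i, (z - w) i ^ 2 = ∑ i ∈ B, z i ^ 2 := by
      have : ∀ i, (z - w) i ^ 2 = if i ∈ B then z i ^ 2 else 0 := by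
        intro i
        by_cases hiB : i ∈ B
        · have hiAB : i ∉ A \ B := fun h => (Finset.mem_sdiff.mp h).2 hiB
          simp [hw, hiB, hiAB]
        · by_cases hiA : i ∈ A
          · have : i ∈ A \ B := Finset.mem_sdiff.mpr ⟨hiA, hiB⟩
            simp [hw, hiB, this, hiA]
          · have hz0 : z i = 0 := by
              by_contra h; exact hiA (by simp [hA, h])
            have : i ∉ A \ B := fun h => hiA (Finset.mem_sdiff.mp h).1
            simp [hw, hiB, this, hz0]
      rw [Finset.sum_congr rfl (fun i _ => this i), Finset.sum_ite_mem,
        Finset.univ_inter]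
    have hSyz : ∑ i ∈ S, z i ^ 2 ≤ ∑ i, (y - z) i ^ 2 := by
      have h1 : ∀ i ∈ S, z i ^ 2 = (y - z) i ^ 2 := by
        intro i hi
        have hiY : i ∉ Y := (Finset.mem_sdiff.mp hi).2
        have hy0 : y i = 0 := by
          by_contra h; exact hiY (by simp [hY, h])
        simp [Pi.sub_apply, hy0]
      rw [Finset.sum_congr rfl h1]
      exact Finset.sum_le_sum_of_subset_of_nonneg (Finset.subset_univ S)
        (fun i _ _ => sq_nonneg _)
    have hmain := sum_min_le (fun i => z i ^ 2) S B hBS hBmin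
    rw [hBcard] at hmain
    -- cast facts
    have hc1 : (0:ℝ) < ((s₀ - s₁ : ℕ) : ℝ) := by
      have : 0 < s₀ - s₁ := by omega
      exact_mod_cast Nat.cast_pos.mpr this
    have hm0 : (0:ℝ) < (S.card : ℝ) := by
      have : 0 < S.card := by omega
      exact_mod_cast Nat.cast_pos.mpr this
    have hk' : (k : ℝ) * ((s₀ - s₁ : ℕ) : ℝ) ≤ ((s₀ - s₂ : ℕ) : ℝ) * (S.card : ℝ) := by
      have hm' : ((A.card : ℝ) - s₁) ≤ (S.card : ℝ) := by
        have h' : ((A.card - s₁ : ℕ) : ℝ) ≤ (S.card : ℝ) := Nat.cast_le.mpr hScard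
        rwa [Nat.cast_sub (by omega : s₁ ≤ A.card)] at h'
      rw [hkdef]; push_cast [Nat.cast_sub (by omega : s₂ ≤ A.card),
        Nat.cast_sub (by omega : s₁ ≤ s₀), Nat.cast_sub (by omega : s₂ ≤ s₀)]
      have ha : (A.card : ℝ) ≤ s₀ := by exact_mod_cast hAcard
      have h12' : (s₁ : ℝ) < s₂ := by exact_mod_cast h12
      have h2a : (s₂ : ℝ) < A.card := by exact_mod_cast hcase
      nlinarith [mul_nonneg (by linarith : (0:ℝ) ≤ (s₂:ℝ) - s₁) (by linarith : (0:ℝ) ≤ (s₀:ℝ) - A.card)]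
    have hQ0 : (0:ℝ) ≤ ∑ i, (y - z) i ^ 2 := Finset.sum_nonneg (fun i _ => sq_nonneg _)
    have hSB0 : (0:ℝ) ≤ ∑ i ∈ B, z i ^ 2 := Finset.sum_nonneg (fun i _ => sq_nonneg _)
    have hk0 : (0:ℝ) ≤ (k:ℝ) := Nat.cast_nonneg _
    have key : ∑ i ∈ B, z i ^ 2 ≤
        (((s₀ - s₂ : ℕ) : ℝ) / ((s₀ - s₁ : ℕ) : ℝ)) * ∑ i, (y - z) i ^ 2 := by
      have hchain : (S.card : ℝ) * (((s₀ - s₁ : ℕ) : ℝ) * ∑ i ∈ B, z i ^ 2) ≤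
          (S.card : ℝ) * (((s₀ - s₂ : ℕ) : ℝ) * ∑ i, (y - z) i ^ 2) := by
        nlinarith [mul_le_mul_of_nonneg_left hmain hc1.le,
          mul_le_mul_of_nonneg_left hSyz (mul_nonneg hc1.le hk0),
          mul_le_mul_of_nonneg_right hk' hQ0]
      have h5 := le_of_mul_le_mul_left hchain hm0
      rw [div_mul_eq_mul_div, le_div_iff₀ hc1, mul_comm]
      linarith
    have hw2 := hbest w hwsupp
    calc l2 (z - p) ≤ l2 (z - w) := hw2
      _ = Real.sqrt (∑ i ∈ B, z i ^ 2) := by rw [l2, hzw]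
      _ ≤ Real.sqrt ((((s₀ - s₂ : ℕ) : ℝ) / ((s₀ - s₁ : ℕ) : ℝ)) * ∑ i, (y - z) i ^ 2) :=
          Real.sqrt_le_sqrt key
      _ = Real.sqrt (((s₀ - s₂ : ℕ) : ℝ) / ((s₀ - s₁ : ℕ) : ℝ)) * l2 (y - z) := by
          rw [Real.sqrt_mul (by positivity)]; rfl
end
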